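/- The average effective resistance of the d-dimensional hypercube satisfies R_ave(Q_d) ~ 1/d as d → ∞; that is, lim_{d→∞} d · R_ave(Q_d) = 1. -/

import Mathlib

open Real Finset

/-- Average effective resistance of the `d`-dimensional hypercube `Q_d`. -/
noncomputable def RaveHyp (d : ℕ) : ℝ :=
  (1 / 2 ^ d) * ∑ m ∈ Finset.Icc 1 d, (1 / (2 * (m : ℝ))) * (d.choose m)

private lemma choose_identity (d : ℕ) :
    ∑ m ∈ Finset.Icc 1 d, (d.choose m : ℝ) / m
      = ∑ k ∈ Finset.Icc 1 d, ((2 : ℝ) ^ k - 1) / k := by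
  induction d with
  | zero => simp
  | succ d ih =>
    have hIcc : ∀ (n : ℕ) (f : ℕ → ℝ),
        ∑ m ∈ Finset.Icc 1 n, f m = ∑ i ∈ Finset.range n, f (1 + i) := by
      intro n f
      rw [← Finset.Ico_add_one_right_eq_Icc, Finset.sum_Ico_eq_sum_range]
      simp
    rw [hIcc]
    push_cast
    have hsplit : ∀ i ∈ Finset.range (d + 1),
        ((d+1).choose (1 + i) : ℝ) / (1 + i)
          = (d.choose (1 + i) : ℝ) / (1 + i) + (d.choose i : ℝ) / (1 + i) := by
      intro i _
      have : (d+1).choose (1+i) = d.choose i + d.choose (1+i) := by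
        rw [show 1 + i = i + 1 from by ring, Nat.choose_succ_succ]
      rw [this]
      push_cast
      ring
    rw [Finset.sum_congr rfl hsplit, Finset.sum_add_distrib]
    have hA : ∑ i ∈ Finset.range (d + 1), (d.choose (1 + i) : ℝ) / (1 + i)
        = ∑ m ∈ Finset.Icc 1 d, (d.choose m : ℝ) / m := by
      rw [hIcc d (fun m => (d.choose m : ℝ) / m), Finset.sum_range_succ]
      have h0 : d.choose (1 + d) = 0 := Nat.choose_eq_zero_of_lt (by omega)
      rw [h0]
      push_cast
      simp
    have hB : ∑ i ∈ Finset.range (d + 1), (d.choose i : ℝ) / (1 + i)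
        = ((2 : ℝ) ^ (d+1) - 1) / (d + 1) := by
      have key : ∀ i ∈ Finset.range (d + 1),
          (d.choose i : ℝ) / (1 + i) = ((d+1).choose (i+1) : ℝ) / (d + 1) := by
        intro i _
        have h := Nat.add_one_mul_choose_eq d i
        have h' : ((d+1) * d.choose i : ℝ) = ((d+1).choose (i+1) * (i+1) : ℝ) := by
          exact_mod_cast congrArg (Nat.cast : ℕ → ℝ) h
        have h1 : (0:ℝ) < 1 + i := by positivity
        have h2 : (0:ℝ) < (d:ℝ) + 1 := by positivity
        field_simp
        push_cast at h' ⊢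
        nlinarith [h']
      rw [Finset.sum_congr rfl key, ← Finset.sum_div]
      congr 1
      have : ∑ i ∈ Finset.range (d + 1), ((d+1).choose (i+1) : ℝ)
          = ∑ j ∈ Finset.range (d + 2), ((d+1).choose j : ℝ) - 1 := by
        rw [Finset.sum_range_succ' (fun j => ((d+1).choose j : ℝ)) (d+1)]
        simp
      rw [this]
      have := Nat.sum_range_choose (d+1)
      have : ∑ j ∈ Finset.range (d + 2), ((d+1).choose j : ℝ) = 2 ^ (d+1) := by
        exact_mod_cast congrArg (Nat.cast : ℕ → ℝ) this
      rw [this]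
    rw [hA, hB, ih, Finset.sum_Icc_succ_top (by omega : 1 ≤ d + 1)]
    push_cast
    ring

private lemma Rave_eq (d : ℕ) :
    RaveHyp d = (1 / 2 ^ (d+1)) * ∑ k ∈ Finset.Icc 1 d, ((2 : ℝ) ^ k - 1) / k := by
  rw [RaveHyp, ← choose_identity, Finset.mul_sum, Finset.mul_sum]
  refine Finset.sum_congr rfl fun m hm => ?_
  rw [pow_succ]
  ring

private lemma geom_Icc (d : ℕ) : ∑ k ∈ Finset.Icc 1 d, (2:ℝ)^k = 2^(d+1) - 2 := by
  induction d with
  | zero => simp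
  | succ d ih =>
    rw [Finset.sum_Icc_succ_top (by omega : 1 ≤ d + 1), ih]
    ring

private lemma S_lower {d : ℕ} (hd : 1 ≤ d) :
    ((2:ℝ)^(d+1) - 2) / d ≤ ∑ k ∈ Finset.Icc 1 d, (2:ℝ)^k / k := by
  rw [← geom_Icc, Finset.sum_div]
  refine Finset.sum_le_sum fun k hk => ?_
  simp only [Finset.mem_Icc] at hk
  have h1 : (0:ℝ) < k := by exact_mod_cast hk.1
  have h2 : (k:ℝ) ≤ d := by exact_mod_cast hk.2
  have : (0:ℝ) < (2:ℝ)^k := by positivity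
  gcongr

private lemma S_upper : ∀ d : ℕ, 5 ≤ d →
    ∑ k ∈ Finset.Icc 1 d, (2:ℝ)^k / k ≤ 2^(d+1) / ((d:ℝ) - 2) := by
  intro d hd
  induction d, hd using Nat.le_induction with
  | base =>
    have : Finset.Icc 1 5 = {1, 2, 3, 4, 5} := by decide
    rw [this]
    norm_num
  | succ d hd ih =>
    rw [Finset.sum_Icc_succ_top (by omega : 1 ≤ d + 1)]
    have hd2 : (0:ℝ) < (d:ℝ) - 2 := by
      have : (5:ℝ) ≤ d := by exact_mod_cast hd
      linarith
    have hd1 : (0:ℝ) < (d:ℝ) + 1 := by positivity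
    have hdr : (5:ℝ) ≤ d := by exact_mod_cast hd
    have step : (2:ℝ)^(d+1) / ((d:ℝ) - 2) + 2^(d+1) / ((d:ℝ)+1)
        ≤ 2^(d+1+1) / (((d:ℝ)+1) - 2) := by
      have hx : (0:ℝ) < (2:ℝ)^d := by positivity
      rw [div_add_div _ _ (ne_of_gt hd2) (ne_of_gt hd1),
        div_le_div_iff₀ (by positivity) (by linarith),
        show ((2:ℝ)^(d+1+1)) = 4 * 2^d by rw [pow_succ, pow_succ]; ring,
        show ((2:ℝ)^(d+1)) = 2 * 2^d by rw [pow_succ]; ring]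
      nlinarith [mul_nonneg hx.le (show (0:ℝ) ≤ (d:ℝ) - 5 by linarith)]
    push_cast
    linarith [ih, step]

theorem hypercube_asymptotic :
    Filter.Tendsto (fun d : ℕ => (d : ℝ) * RaveHyp d) Filter.atTop (nhds 1) := by
  have hSsplit : ∀ d : ℕ, (d : ℝ) * RaveHyp d
      = ((d:ℝ) / 2^(d+1)) * (∑ k ∈ Finset.Icc 1 d, (2:ℝ)^k / k)
        - ((d:ℝ) / 2^(d+1)) * (∑ k ∈ Finset.Icc 1 d, (1:ℝ) / k) := by
    intro d
    rw [Rave_eq, ← mul_sub, ← Finset.sum_sub_distrib]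
    have : ∀ k ∈ Finset.Icc 1 d, (2:ℝ)^k / k - 1/k = ((2:ℝ)^k - 1)/k := by
      intro k hk; ring
    rw [Finset.sum_congr rfl this]
    ring
  -- lower and upper bounds
  have hlow : ∀ᶠ d : ℕ in Filter.atTop,
      1 - (1/2:ℝ)^d - ((d:ℝ)^2 * (1/2:ℝ)^d) / 2 ≤ (d : ℝ) * RaveHyp d := by
    filter_upwards [Filter.eventually_ge_atTop 5] with d hd
    rw [hSsplit]
    have hd1 : (1:ℕ) ≤ d := by omega
    have hdpos : (0:ℝ) < d := by exact_mod_cast hd1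
    have hppos : (0:ℝ) < 2^(d+1) := by positivity
    have h1 : ((d:ℝ) / 2^(d+1)) * (((2:ℝ)^(d+1) - 2) / d)
        ≤ ((d:ℝ) / 2^(d+1)) * (∑ k ∈ Finset.Icc 1 d, (2:ℝ)^k / k) := by
      apply mul_le_mul_of_nonneg_left (S_lower hd1) (by positivity)
    have h2 : ((d:ℝ) / 2^(d+1)) * (∑ k ∈ Finset.Icc 1 d, (1:ℝ) / k)
        ≤ ((d:ℝ) / 2^(d+1)) * d := by
      apply mul_le_mul_of_nonneg_left _ (by positivity)
      calc ∑ k ∈ Finset.Icc 1 d, (1:ℝ) / k ≤ ∑ k ∈ Finset.Icc 1 d, (1:ℝ) := by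
            refine Finset.sum_le_sum fun k hk => ?_
            simp only [Finset.mem_Icc] at hk
            have : (1:ℝ) ≤ k := by exact_mod_cast hk.1
            rw [div_le_one (by linarith)]; exact this
        _ = d := by simp
    have e1 : ((d:ℝ) / 2^(d+1)) * (((2:ℝ)^(d+1) - 2) / d) = 1 - (1/2:ℝ)^d := by
      field_simp
      rw [pow_succ]
      have hh : (1/2:ℝ)^d * 2^d = 1 := by rw [← mul_pow]; norm_num
      linear_combination 2 * hh
    have e2 : ((d:ℝ) / 2^(d+1)) * d = ((d:ℝ)^2 * (1/2:ℝ)^d) / 2 := by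
      rw [div_pow, one_pow, pow_succ]
      field_simp
    rw [e1] at h1
    rw [e2] at h2
    linarith
  have hup : ∀ᶠ d : ℕ in Filter.atTop,
      (d : ℝ) * RaveHyp d ≤ (d:ℝ) / ((d:ℝ) - 2) := by
    filter_upwards [Filter.eventually_ge_atTop 5] with d hd
    rw [hSsplit]
    have hdr : (5:ℝ) ≤ d := by exact_mod_cast hd
    have hH : 0 ≤ ((d:ℝ) / 2^(d+1)) * (∑ k ∈ Finset.Icc 1 d, (1:ℝ) / k) := by
      apply mul_nonneg (by positivity)
      apply Finset.sum_nonneg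
      intro k hk
      positivity
    have h1 : ((d:ℝ) / 2^(d+1)) * (∑ k ∈ Finset.Icc 1 d, (2:ℝ)^k / k)
        ≤ ((d:ℝ) / 2^(d+1)) * (2^(d+1) / ((d:ℝ) - 2)) :=
      mul_le_mul_of_nonneg_left (S_upper d hd) (by positivity)
    have e1 : ((d:ℝ) / 2^(d+1)) * (2^(d+1) / ((d:ℝ) - 2)) = (d:ℝ) / ((d:ℝ) - 2) := by
      have : (0:ℝ) < 2^(d+1) := by positivity
      field_simp
    rw [e1] at h1
    linarith
  -- limits of bounds
  have hhalf : ‖(1/2 : ℝ)‖ < 1 := by norm_num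
  have t1 : Filter.Tendsto (fun d : ℕ => ((1:ℝ)/2)^d) Filter.atTop (nhds 0) :=
    tendsto_pow_atTop_nhds_zero_of_norm_lt_one hhalf
  have t2 : Filter.Tendsto (fun d : ℕ => (d:ℝ)^2 * ((1:ℝ)/2)^d) Filter.atTop (nhds 0) :=
    (summable_pow_mul_geometric_of_norm_lt_one 2 hhalf).tendsto_atTop_zero
  have tlow : Filter.Tendsto
      (fun d : ℕ => 1 - (1/2:ℝ)^d - ((d:ℝ)^2 * (1/2:ℝ)^d) / 2) Filter.atTop (nhds 1) := by
    have h := (tendsto_const_nhds (x := (1:ℝ)) (f := Filter.atTop (α := ℕ))).sub t1 |>.sub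
      (t2.div_const 2)
    rw [show (1:ℝ) - 0 - 0/2 = 1 by ring] at h
    exact h
  have tup : Filter.Tendsto (fun d : ℕ => (d:ℝ) / ((d:ℝ) - 2)) Filter.atTop (nhds 1) := by
    have hsub : Filter.Tendsto (fun d : ℕ => (d:ℝ) - 2) Filter.atTop Filter.atTop :=
      Filter.tendsto_atTop_add_const_right _ _ tendsto_natCast_atTop_atTop
    have h2 : Filter.Tendsto (fun d : ℕ => 2 / ((d:ℝ) - 2)) Filter.atTop (nhds 0) :=
      hsub.const_div_atTop 2
    have heq : ∀ᶠ d : ℕ in Filter.atTop,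
        1 + 2 / ((d:ℝ) - 2) = (d:ℝ) / ((d:ℝ) - 2) := by
      filter_upwards [Filter.eventually_ge_atTop 3] with d hd
      have h3 : (3:ℝ) ≤ d := by exact_mod_cast hd
      have hne : (d:ℝ) - 2 ≠ 0 := by linarith
      field_simp
      ring
    have := (tendsto_const_nhds (x := (1:ℝ)) (f := Filter.atTop (α := ℕ))).add h2
    rw [show (1:ℝ) + 0 = 1 by ring] at this
    exact Filter.Tendsto.congr' heq this
  exact tendsto_of_tendsto_of_tendsto_of_le_of_le' tlow tup hlow hup
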